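/- arXiv:2108.09125 — 4 statements merged into one kernel-verified Lean document; each statement's English description precedes it below -/
import Mathlib

section
/- (Lemma: K from LMI implies contraction) Suppose there exist λ ∈ (0,1), X = Xᵀ ≻ 0 and Y such that the block matrix [[X, A_p^i X + B_p^i Y],[X (A_p^i)ᵀ + Yᵀ (B_p^i)ᵀ, λX]] ⪰ 0 for all i ∈ {1,...,H}. Then with K_p := Y X^{-1} and P := X^{-1}, it holds that (A_p^i + B_p^i K_p)ᵀ P (A_p^i + B_p^i K_p) - P ⪯ -(1-λ)P for all i ∈ {1,...,H}. -/
open Matrix Finset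

theorem stmt5 {n m : ℕ} (H : ℕ)
    (Ap : Matrix (Fin n) (Fin n) ℝ) (Bp : Matrix (Fin n) (Fin m) ℝ)
    (Bpow : ℕ → Matrix (Fin n) (Fin m) ℝ)
    (hBpow : ∀ i, Bpow i = ∑ j ∈ Finset.range i, Ap ^ j * Bp)
    (lam : ℝ) (hlam : lam ∈ Set.Ioo (0 : ℝ) 1)
    (X : Matrix (Fin n) (Fin n) ℝ) (Y : Matrix (Fin m) (Fin n) ℝ)
    (hX : X.PosDef)
    (hLMI : ∀ i ∈ Finset.Icc 1 H,
      (Matrix.fromBlocks X (Ap ^ i * X + Bpow i * Y)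
        (X * (Ap ^ i)ᵀ + Yᵀ * (Bpow i)ᵀ) (lam • X)).PosSemidef)
    (Kp : Matrix (Fin m) (Fin n) ℝ) (hK : Kp = Y * X⁻¹)
    (P : Matrix (Fin n) (Fin n) ℝ) (hP : P = X⁻¹) :
    ∀ i ∈ Finset.Icc 1 H,
      ((-(1 - lam)) • P
        - ((Ap ^ i + Bpow i * Kp)ᵀ * P * (Ap ^ i + Bpow i * Kp) - P)).PosSemidef := by
  intro i hi
  have hdet : IsUnit X.det := isUnit_iff_ne_zero.mpr hX.det_pos.ne'
  have hXinv : Invertible X := X.invertibleOfIsUnitDet hdet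
  have hXsym : Xᵀ = X := hX.1.eq
  set C : Matrix (Fin n) (Fin n) ℝ := Ap ^ i * X + Bpow i * Y with hC
  have hBL : X * (Ap ^ i)ᵀ + Yᵀ * (Bpow i)ᵀ = Cᴴ := by
    simp [hC, conjTranspose_eq_transpose_of_trivial, transpose_add, transpose_mul, hXsym]
  have hSchur : ((lam • X) - Cᴴ * X⁻¹ * C).PosSemidef := by
    rw [← Matrix.PosDef.fromBlocks₁₁ C (lam • X) hX]
    rw [← hBL]
    exact hLMI i hi
  have hXinvSym : X⁻¹ᵀ = X⁻¹ := by rw [Matrix.transpose_nonsing_inv, hXsym]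
  have hmain : ((X⁻¹)ᴴ * ((lam • X) - Cᴴ * X⁻¹ * C) * X⁻¹).PosSemidef :=
    hSchur.conjTranspose_mul_mul_same X⁻¹
  have key : (-(1 - lam)) • P
        - ((Ap ^ i + Bpow i * Kp)ᵀ * P * (Ap ^ i + Bpow i * Kp) - P)
      = (X⁻¹)ᴴ * ((lam • X) - Cᴴ * X⁻¹ * C) * X⁻¹ := by
    have hM : Ap ^ i + Bpow i * Kp = C * X⁻¹ := by
      rw [hK, hC]
      rw [add_mul, Matrix.mul_assoc, Matrix.mul_nonsing_inv _ hdet, Matrix.mul_one,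
        Matrix.mul_assoc]
    have hXXinv : X * X⁻¹ = 1 := Matrix.mul_nonsing_inv _ hdet
    rw [hM, hP]
    simp only [conjTranspose_eq_transpose_of_trivial, transpose_mul, hXinvSym]
    simp only [Matrix.mul_sub, Matrix.sub_mul, Matrix.mul_smul, Matrix.smul_mul,
      Matrix.mul_assoc, hXXinv, Matrix.mul_one]
    module
  rw [key]
  exact hmain
end

section
/- (Correctness of the RCI construction algorithm) Let E ⊆ ℝ^n, and suppose for each i ∈ {1,...,H} there are λ_i ∈ (0,1] with λ_i < 1 and δ_i ≥ 0 such that A_K^i E ⊆ λ_i E and ⊕_{j=0}^{i-1} A_p^j D ⊆ δ_i E. Define ρ := max_{i∈{1,...,H}} δ_i/(1-λ_i) and Ω_p := ρE. If E is convex and contains the origin, then A_K^i Ω_p ⊕ (⊕_{j=0}^{i-1} A_p^j D) ⊆ Ω_p for all i ∈ {1,...,H}. -/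
open Pointwise Matrix Finset

theorem stmt10 {n : ℕ} (H : ℕ) (hH : 1 ≤ H)
    (Ap : Matrix (Fin n) (Fin n) ℝ)
    (AK : ℕ → Matrix (Fin n) (Fin n) ℝ)
    (D E : Set (Fin n → ℝ))
    (hE : Convex ℝ E) (h0 : (0 : Fin n → ℝ) ∈ E)
    (lam δ : ℕ → ℝ)
    (hlam : ∀ i ∈ Finset.Icc 1 H, lam i ∈ Set.Ioc (0 : ℝ) 1 ∧ lam i < 1)
    (hδ : ∀ i ∈ Finset.Icc 1 H, 0 ≤ δ i)
    (hcontr : ∀ i ∈ Finset.Icc 1 H, (AK i).mulVec '' E ⊆ lam i • E)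
    (hdist : ∀ i ∈ Finset.Icc 1 H,
      (∑ j ∈ Finset.range i, (Ap ^ j).mulVec '' D) ⊆ δ i • E)
    (ρ : ℝ)
    (hρ : ρ = (Finset.Icc 1 H).sup' (Finset.nonempty_Icc.mpr hH)
      (fun i => δ i / (1 - lam i)))
    (Ωp : Set (Fin n → ℝ)) (hΩ : Ωp = ρ • E) :
    ∀ i ∈ Finset.Icc 1 H,
      ((AK i).mulVec '' Ωp) + (∑ j ∈ Finset.range i, (Ap ^ j).mulVec '' D) ⊆ Ωp := by
  intro i hi
  obtain ⟨⟨hl0, _⟩, hl1⟩ := hlam i hi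
  have hδi := hδ i hi
  have h1l : 0 < 1 - lam i := by linarith
  have hρi : δ i / (1 - lam i) ≤ ρ := hρ ▸ Finset.le_sup' (fun i => δ i / (1 - lam i)) hi
  have hρ0 : 0 ≤ ρ := le_trans (div_nonneg hδi h1l.le) hρi
  have hkey : δ i ≤ ρ * (1 - lam i) := by
    rw [div_le_iff₀ h1l] at hρi; linarith
  -- membership in ρ • E for scalars c with 0 ≤ c ≤ ρ
  have hsub : ∀ c : ℝ, 0 ≤ c → c ≤ ρ → ∀ x ∈ E, c • x ∈ ρ • E := by
    intro c hc0 hcρ x hx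
    rcases eq_or_lt_of_le hρ0 with h | h
    · have : c = 0 := le_antisymm (h ▸ hcρ) hc0
      exact ⟨0, h0, by simp [this, ← h]⟩
    · refine ⟨(c / ρ) • x, hE.smul_mem_of_zero_mem h0 hx ⟨div_nonneg hc0 hρ0, div_le_one_of_le₀ hcρ hρ0⟩, ?_⟩
      show ρ • (c / ρ) • x = c • x
      rw [smul_smul, mul_div_cancel₀ _ h.ne']
  subst hΩ
  rintro z ⟨a, ⟨w, ⟨e1, he1, rfl⟩, rfl⟩, b, hb, rfl⟩
  obtain ⟨e3, he3, h3⟩ := hcontr i hi ⟨e1, he1, rfl⟩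
  obtain ⟨e2, he2, rfl⟩ := hdist i hi hb
  have ha : (AK i).mulVec (ρ • e1) = (ρ * lam i) • e3 := by
    rw [Matrix.mulVec_smul, ← h3, smul_smul]
  rw [ha]
  -- (ρ*lam)•e3 + δ•e2 ∈ (ρ*lam + δ)•E ⊆ ρ•E
  have hmul0 : 0 ≤ ρ * lam i := mul_nonneg hρ0 hl0.le
  have hsum : (ρ * lam i) • e3 + δ i • e2 ∈ (ρ * lam i + δ i) • E := by
    rw [hE.add_smul hmul0 hδi]
    exact Set.add_mem_add ⟨e3, he3, rfl⟩ ⟨e2, he2, rfl⟩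
  obtain ⟨e4, he4, h4⟩ := hsum
  show (ρ * lam i) • e3 + δ i • e2 ∈ ρ • E
  have h4' : (ρ * lam i + δ i) • e4 = (ρ * lam i) • e3 + δ i • e2 := h4
  rw [← h4']
  exact hsub _ (by positivity) (by nlinarith) e4 he4
end

section
/- (Token bucket base period) Consider the token bucket dynamics β(k+1) = min{β(k) + g - γ(k)c, b} with 1 ≤ g ≤ c ≤ b and γ(k) ∈ {0,1}, subject to the constraint that γ(k) = 1 only if β(k) ≥ c - g (so that β stays nonnegative). If β(0) ≥ c - g and transmissions are triggered periodically with period M = ⌈c/g⌉ (γ(k) = 1 iff k mod M = 0), then β(k) ≥ 0 for all k and β(k) ≥ c - g whenever k mod M = 0. -/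
theorem stmt11 (g c b : ℕ) (hg : 1 ≤ g) (hgc : g ≤ c) (hcb : c ≤ b)
    (M : ℕ) (hM : M = (c + g - 1) / g)
    (β : ℕ → ℤ)
    (hβ0 : (c : ℤ) - g ≤ β 0)
    (hdyn : ∀ k, β (k + 1)
      = min (β k + g - (if k % M = 0 then (c : ℤ) else 0)) b) :
    ∀ k, 0 ≤ β k ∧ (k % M = 0 → (c : ℤ) - g ≤ β k) := by
  have hg' : (1:ℤ) ≤ g := by exact_mod_cast hg
  have hgc' : (g:ℤ) ≤ c := by exact_mod_cast hgc
  have hb' : (c:ℤ) ≤ b := by exact_mod_cast hcb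
  have hM1 : 1 ≤ M := by
    subst hM
    rw [Nat.le_div_iff_mul_le (by omega)]
    omega
  have hMg : c ≤ M * g := by
    have h1 := Nat.div_add_mod (c + g - 1) g
    have h2 : (c + g - 1) % g < g := Nat.mod_lt _ (by omega)
    subst hM
    rw [mul_comm]
    obtain ⟨t, ht⟩ : ∃ t, g * ((c + g - 1) / g) = t := ⟨_, rfl⟩
    rw [ht] at h1 ⊢
    omega
  have hMg' : (c:ℤ) ≤ (M:ℤ) * g := by exact_mod_cast hMg
  have hsucc : ∀ k, (k+1) % M = (k % M + 1) % M := by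
    intro k
    conv_lhs => rw [← Nat.mod_add_div k M]
    rw [add_right_comm, Nat.add_mul_mod_self_left]
  have key : ∀ k,
      min (if k % M = 0 then (c:ℤ) - g else ((k % M : ℕ) : ℤ) * g - g) (b:ℤ) ≤ β k := by
    intro k
    induction k with
    | zero =>
      simp only [Nat.zero_mod, if_pos rfl]
      exact le_trans (min_le_left _ _) hβ0
    | succ k ih =>
      rw [hdyn k]
      refine le_min ?_ (min_le_right _ _)
      have hM2 := hsucc k
      by_cases h0 : k % M = 0
      · rw [if_pos h0]
        rw [if_pos h0] at ih
        have hβk : (c:ℤ) - g ≤ β k :=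
          le_trans (le_min (le_refl _) (by linarith)) ih
        rw [hM2, h0]
        by_cases hMone : M = 1
        · subst hMone
          have hcg : (c:ℤ) ≤ g := by
            have : ((1:ℕ):ℤ) * g = g := by push_cast; ring
            rw [this] at hMg'
            exact hMg'
          have h01 : (0 + 1) % 1 = 0 := rfl
          rw [h01, if_pos rfl]
          refine le_trans (min_le_left _ _) ?_
          linarith
        · have h01 : (0 + 1) % M = 1 := Nat.mod_eq_of_lt (by omega)
          rw [h01, if_neg one_ne_zero]
          refine le_trans (min_le_left _ _) ?_
          push_cast
          linarith
      · rw [if_neg h0]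
        rw [if_neg h0] at ih
        have hrlt : k % M < M := Nat.mod_lt _ (by omega)
        have hr1 : 1 ≤ k % M := Nat.one_le_iff_ne_zero.mpr h0
        by_cases hend : k % M + 1 = M
        · rw [hM2, hend, Nat.mod_self, if_pos rfl]
          have hMc : ((k % M : ℕ) : ℤ) = (M:ℤ) - 1 := by
            have h : ((k % M : ℕ) : ℤ) + 1 = (M:ℤ) := by exact_mod_cast hend
            linarith
          rw [hMc] at ih
          rcases min_cases (((M:ℤ) - 1) * g - g) (b:ℤ) with ⟨he, _⟩ | ⟨he, _⟩ <;>
            rw [he] at ih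
          · refine le_trans (min_le_left _ _) ?_
            nlinarith [ih, hMg']
          · refine le_trans (min_le_left _ _) ?_
            linarith
        · rw [hM2, Nat.mod_eq_of_lt (by omega), if_neg (by omega)]
          rcases min_cases (((k % M : ℕ) : ℤ) * g - g) (b:ℤ) with ⟨he, _⟩ | ⟨he, _⟩ <;>
            rw [he] at ih
          · refine le_trans (min_le_left _ _) ?_
            push_cast at ih ⊢
            nlinarith [ih]
          · refine le_trans (min_le_right _ _) ?_
            linarith
  intro k
  have hk := key k
  constructor
  · refine le_trans ?_ hk
    refine le_min ?_ (by positivity)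
    by_cases h0 : k % M = 0
    · rw [if_pos h0]; linarith
    · rw [if_neg h0]
      have hr1 : (1:ℤ) ≤ ((k % M : ℕ) : ℤ) := by
        exact_mod_cast Nat.one_le_iff_ne_zero.mpr h0
      nlinarith
  · intro h0
    rw [if_pos h0] at hk
    exact le_trans (le_min (le_refl _) (by linarith)) hk
end

section
/- (Schedule constraint implies bounded closed-loop inter-transmission times) Let H ≥ M ≥ 1 und N̄ ≥ H. Define N(k) := N̄ - (k mod M). Suppose γ : ℕ → {0,1} is a closed-loop transmission sequence generated such that at each time k a predicted schedule γ̄(·|k) ∈ Γ^H_{N(k)}(s(k)) is chosen with γ(k) = γ̄(0|k), where s(k) counts the steps since the last transmission (s(k+1) = 0 if γ(k)=1, else s(k)+1, with s(0)=0 and γ(0)=1), and Γ^H_N(s) requires the first transmission in the schedule to occur within the first H-s-1 steps unless N ≤ H-s-1. Then for every k, Σ_{i=k}^{k+H-1} γ(i) ≥ 1, i.e., there is a transmission at least every H steps. -/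
open Finset

theorem stmt15 (H M Nbar : ℕ) (hM : 1 ≤ M) (hHM : M ≤ H) (hN : H ≤ Nbar)
    (N : ℕ → ℕ) (hNdef : ∀ k, N k = Nbar - k % M)
    (γ : ℕ → ℕ) (hγbin : ∀ k, γ k ≤ 1)
    (s : ℕ → ℕ) (hs0 : s 0 = 0)
    (hsdyn : ∀ k, s (k + 1) = if γ k = 1 then 0 else s k + 1)
    (hγ0 : γ 0 = 1)
    (γbar : ℕ → ℕ → ℕ)
    (hfirst : ∀ k, γ k = γbar k 0)
    -- predicted schedule lies in Γ^H_{N(k)}(s(k)): either the horizon is short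
    -- enough that no transmission is required, or the first transmission occurs
    -- within the first H - s(k) - 1 steps
    (hsched : ∀ k, N k ≤ H - s k - 1
      ∨ ∃ i, i ≤ H - s k - 1 ∧ i < N k ∧ γbar k i = 1) :
    ∀ k, 1 ≤ ∑ i ∈ Finset.Ico k (k + H), γ i := by
  have hNpos : ∀ k, 1 ≤ N k := by
    intro k
    have : k % M < M := Nat.mod_lt _ hM
    rw [hNdef]
    omega
  -- if s k = H - 1 then γ k = 1
  have hkey : ∀ k, s k = H - 1 → γ k = 1 := by
    intro k hsk
    rcases hsched k with h | ⟨i, hi, _, hγi⟩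
    · have := hNpos k; omega
    · have : i = 0 := by omega
      rw [hfirst k, ← this]; exact hγi
  -- invariant s k ≤ H - 1
  have hinv : ∀ k, s k ≤ H - 1 := by
    intro k
    induction k with
    | zero => omega
    | succ n ih =>
      rw [hsdyn n]
      by_cases h : γ n = 1
      · simp [h]
      · simp [h]
        have : s n ≠ H - 1 := fun hc => h (hkey n hc)
        omega
  intro k
  by_contra hcon
  push_neg at hcon
  have hzero : ∀ i ∈ Finset.Ico k (k + H), γ i = 0 := by
    intro i hi
    by_contra hne
    have h1 : 1 ≤ γ i := by omega
    have : 1 ≤ ∑ j ∈ Finset.Ico k (k + H), γ j :=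
      le_trans h1 (Finset.single_le_sum (f := γ) (fun _ _ => Nat.zero_le _) hi)
    omega
  set d := H - 1 - s k with hd
  have hstep : ∀ t, t ≤ d → s (k + t) = s k + t := by
    intro t ht
    induction t with
    | zero => simp
    | succ n ih =>
      have hn : n ≤ d := by omega
      have hmem : k + n ∈ Finset.Ico k (k + H) := by
        simp only [Finset.mem_Ico]
        constructor
        · omega
        · have := hinv k; omega
      have hγkn : γ (k + n) = 0 := hzero _ hmem
      have := hsdyn (k + n)
      rw [hγkn] at this
      simp at this
      rw [show k + (n + 1) = (k + n) + 1 by ring, this, ih hn]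
      ring
  have hsend : s (k + d) = H - 1 := by
    rw [hstep d le_rfl]
    have := hinv k; omega
  have hγend : γ (k + d) = 1 := hkey _ hsend
  have hmem : k + d ∈ Finset.Ico k (k + H) := by
    simp only [Finset.mem_Ico]
    constructor
    · omega
    · have := hinv k; omega
  have := hzero _ hmem
  omega
end
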